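/- arXiv:2310.07192 — 2 statements merged into one kernel-verified Lean document; each statement's English description precedes it below -/
import Mathlib

section
/- Let M be an invertible real 3×3 matrix, 𝔚(w) = w/(1+|Mw|²)^{1/2}, and m ≥ 1. Then 𝔚 restricted to the open ball {w ∈ ℝ³ : |w| < m} is a C^∞ diffeomorphism onto its image, and there exists N = N(M) > 0, independent of m, such that for j = 1, 2, 3, sup over v ∈ 𝔚({|w| < m}) of |Dʲ(𝔚⁻¹)(v)| is at most N·m^{2j+1}. -/
/-!
STATEMENT 2: Let M be an invertible real 3×3 matrix, 𝔚(w) = w/(1+|Mw|²)^{1/2}, and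
m ≥ 1. Then 𝔚 restricted to the open ball {w ∈ ℝ³ : |w| < m} is a C^∞ diffeomorphism
onto its image, and there exists N = N(M) > 0, independent of m, such that for
j = 1, 2, 3, sup over v ∈ 𝔚({|w| < m}) of |Dʲ(𝔚⁻¹)(v)| is at most N·m^{2j+1}.
(The inverse of the restriction of 𝔚 is the map v ↦ v/(1−|Mv|²)^{1/2}.)
-/

noncomputable section
open Real Matrix
open scoped ENNReal NNReal

abbrev E3 : Type := EuclideanSpace ℝ (Fin 3)

def toE3 (v : Fin 3 → ℝ) : E3 := WithLp.toLp 2 v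

/-- The map `𝔚(w) = w / (1 + |M w|²)^{1/2}`. -/
def frakW (M : Matrix (Fin 3) (Fin 3) ℝ) (w : E3) : E3 :=
  (Real.sqrt (1 + ‖toE3 (M.mulVec w)‖ ^ 2))⁻¹ • w

/-- The inverse map `v ↦ v / (1 − |M v|²)^{1/2}`. -/
def invW (M : Matrix (Fin 3) (Fin 3) ℝ) (v : E3) : E3 :=
  (Real.sqrt (1 - ‖toE3 (M.mulVec v)‖ ^ 2))⁻¹ • v

/-! ### Auxiliary definitions and lemmas -/

def LM (M : Matrix (Fin 3) (Fin 3) ℝ) : E3 →L[ℝ] E3 :=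
  LinearMap.toContinuousLinearMap
    { toFun := fun w => toE3 (M.mulVec w)
      map_add' := fun x y => by simp [toE3, Matrix.mulVec_add]
      map_smul' := fun c x => by simp [toE3, Matrix.mulVec_smul] }

lemma LM_apply (M : Matrix (Fin 3) (Fin 3) ℝ) (w : E3) : LM M w = toE3 (M.mulVec w) := rfl

def gM (M : Matrix (Fin 3) (Fin 3) ℝ) (v : E3) : ℝ := 1 - ‖LM M v‖ ^ 2

section Alg
variable (M : Matrix (Fin 3) (Fin 3) ℝ)

lemma LM_inv (hM : IsUnit M) (v : E3) : LM M⁻¹ (LM M v) = v := by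
  ext i
  simp only [LM_apply, toE3, Matrix.mulVec_mulVec]
  rw [Matrix.nonsing_inv_mul M ((Matrix.isUnit_iff_isUnit_det M).1 hM)]
  simp

lemma frakW_eq : frakW M = fun w => (Real.sqrt (1 + ‖LM M w‖ ^ 2))⁻¹ • w := rfl
lemma invW_eq : invW M = fun v => (Real.sqrt (gM M v))⁻¹ • v := rfl

lemma norm_LM_smul (c : ℝ) (w : E3) : ‖LM M (c • w)‖ = |c| * ‖LM M w‖ := by
  rw [_root_.map_smul, norm_smul, Real.norm_eq_abs]

lemma one_add_pos (w : E3) : (0:ℝ) < 1 + ‖LM M w‖ ^ 2 := by positivity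

lemma gM_frakW (w : E3) : gM M (frakW M w) = (1 + ‖LM M w‖ ^ 2)⁻¹ := by
  have h := one_add_pos M w
  have hs : Real.sqrt (1 + ‖LM M w‖ ^ 2) ^ 2 = 1 + ‖LM M w‖ ^ 2 := Real.sq_sqrt h.le
  rw [frakW_eq]
  simp only [gM, norm_LM_smul, mul_pow, sq_abs, inv_pow, hs]
  field_simp
  ring

lemma frakW_apply (w : E3) : frakW M w = (Real.sqrt (1 + ‖LM M w‖ ^ 2))⁻¹ • w := rfl
lemma invW_apply (v : E3) : invW M v = (Real.sqrt (gM M v))⁻¹ • v := rfl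

lemma invW_frakW (w : E3) : invW M (frakW M w) = w := by
  have h := one_add_pos M w
  have hs : Real.sqrt (1 + ‖LM M w‖ ^ 2) ≠ 0 := by positivity
  rw [invW_apply, gM_frakW, Real.sqrt_inv, inv_inv, frakW_apply, smul_smul,
    mul_inv_cancel₀ hs, one_smul]

lemma frakW_invW (v : E3) (hv : 0 < gM M v) : frakW M (invW M v) = v := by
  have hg : Real.sqrt (gM M v) ≠ 0 := by positivity
  have hg2 : Real.sqrt (gM M v) ^ 2 = gM M v := Real.sq_sqrt hv.le
  have key : 1 + ‖LM M (invW M v)‖ ^ 2 = (gM M v)⁻¹ := by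
    rw [invW_apply]
    simp only [norm_LM_smul, mul_pow, sq_abs, inv_pow, hg2]
    have : ‖LM M v‖ ^ 2 = 1 - gM M v := by simp [gM]
    rw [this]
    field_simp
    ring
  rw [frakW_apply, key, Real.sqrt_inv, inv_inv, invW_apply, smul_smul,
    mul_inv_cancel₀ hg, one_smul]

def UM : Set E3 := (gM M) ⁻¹' (Set.Ioi 0)

lemma continuous_gM : Continuous (gM M) := by
  unfold gM
  fun_prop

lemma isOpen_UM : IsOpen (UM M) := (isOpen_Ioi).preimage (continuous_gM M)

lemma contDiff_gM : ContDiff ℝ (⊤ : ℕ∞) (gM M) := by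
  unfold gM
  exact contDiff_const.sub ((LM M).contDiff.norm_sq ℝ)

lemma contDiff_frakW : ContDiff ℝ (⊤ : ℕ∞) (frakW M) := by
  rw [frakW_eq, contDiff_iff_contDiffAt]
  intro w
  have h1 : ContDiffAt ℝ (⊤ : ℕ∞) (fun w : E3 => 1 + ‖LM M w‖ ^ 2) w :=
    ContDiffAt.add contDiffAt_const ((LM M).contDiff.norm_sq ℝ).contDiffAt
  have h2 : ContDiffAt ℝ (⊤ : ℕ∞) (fun w : E3 => Real.sqrt (1 + ‖LM M w‖ ^ 2)) w :=
    h1.sqrt (one_add_pos M w).ne'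
  exact (h2.inv (by positivity)).smul contDiffAt_id

lemma contDiffAt_invW (v : E3) (hv : 0 < gM M v) : ContDiffAt ℝ (⊤ : ℕ∞) (invW M) v := by
  rw [invW_eq]
  have h1 : ContDiffAt ℝ (⊤ : ℕ∞) (gM M) v := (contDiff_gM M).contDiffAt
  exact ((h1.sqrt hv.ne').inv (by positivity)).smul contDiffAt_id

lemma contDiffOn_invW : ContDiffOn ℝ (⊤ : ℕ∞) (invW M) (UM M) := fun v hv =>
  (contDiffAt_invW M v hv).contDiffWithinAt

lemma image_eq (m : ℝ) :
    frakW M '' Metric.ball (0 : E3) m = UM M ∩ invW M ⁻¹' Metric.ball (0 : E3) m := by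
  ext v
  constructor
  · rintro ⟨w, hw, rfl⟩
    refine ⟨?_, ?_⟩
    · show 0 < gM M (frakW M w)
      rw [gM_frakW]
      exact inv_pos.2 (one_add_pos M w)
    · simp only [Set.mem_preimage, invW_frakW]
      exact hw
  · rintro ⟨hv, hv'⟩
    exact ⟨invW M v, hv', frakW_invW M v hv⟩

lemma isOpen_image (m : ℝ) : IsOpen (frakW M '' Metric.ball (0 : E3) m) := by
  rw [image_eq]
  exact (contDiffOn_invW M).continuousOn.isOpen_inter_preimage (isOpen_UM M) Metric.isOpen_ball

end Alg

/-! ### The scalar function `t ↦ (√t)⁻¹` -/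

def qf : ℝ → ℝ := fun t => (Real.sqrt t)⁻¹

lemma iteratedDeriv_rpow (c : ℝ) (n : ℕ) : ∀ t : ℝ, 0 < t →
    iteratedDeriv n (fun u : ℝ => u ^ c) t
      = (∏ i ∈ Finset.range n, (c - i)) * t ^ (c - n) := by
  induction n with
  | zero => intro t ht; simp
  | succ n ih =>
    intro t ht
    rw [iteratedDeriv_succ]
    have h1 : iteratedDeriv n (fun u : ℝ => u ^ c)
        =ᶠ[nhds t] fun u => (∏ i ∈ Finset.range n, (c - i)) * u ^ (c - n) := by
      filter_upwards [isOpen_Ioi.mem_nhds (Set.mem_Ioi.2 ht)] with u hu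
      exact ih u hu
    rw [h1.deriv_eq]
    rw [deriv_const_mul _ (Real.differentiableAt_rpow_const_of_ne _ ht.ne')]
    rw [Real.deriv_rpow_const t]
    rw [Finset.prod_range_succ]
    push_cast
    rw [show c - (n:ℝ) - 1 = c - ((n:ℝ) + 1) from by ring]
    ring

lemma qf_eventuallyEq {t : ℝ} (ht : 0 < t) :
    qf =ᶠ[nhds t] fun u : ℝ => u ^ (-(1/2) : ℝ) := by
  filter_upwards [isOpen_Ioi.mem_nhds (Set.mem_Ioi.2 ht)] with u hu
  rw [qf, Real.sqrt_eq_rpow, ← Real.rpow_neg (le_of_lt hu)]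

lemma contDiffOn_qf : ContDiffOn ℝ (⊤ : ℕ∞) qf (Set.Ioi 0) := by
  intro t ht
  exact ((contDiffAt_id.sqrt (ne_of_gt ht)).inv (Real.sqrt_pos.2 ht).ne').contDiffWithinAt

lemma prod_range_add_one_eq_factorial' (k : ℕ) :
    ∏ j ∈ Finset.range k, ((j:ℝ) + 1) = (k.factorial : ℝ) := by
  induction k with
  | zero => simp
  | succ k ih =>
    rw [Finset.prod_range_succ, ih, Nat.factorial_succ]
    push_cast
    ring

lemma norm_iFDW_qf {n i : ℕ} (hi : i ≤ n) {t : ℝ} (ht0 : 0 < t) (ht1 : t ≤ 1) :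
    ‖iteratedFDerivWithin ℝ i qf (Set.Ioi 0) t‖
      ≤ (n.factorial : ℝ) * ((Real.sqrt t)⁻¹ * (t⁻¹) ^ n) := by
  rw [iteratedFDerivWithin_of_isOpen i isOpen_Ioi (Set.mem_Ioi.2 ht0)]
  rw [norm_iteratedFDeriv_eq_norm_iteratedDeriv]
  have hcong : iteratedDeriv i qf t
      = iteratedDeriv i (fun u : ℝ => u ^ (-(1/2) : ℝ)) t := by
    simp only [iteratedDeriv_eq_iteratedFDeriv]
    rw [← iteratedFDerivWithin_univ, ← iteratedFDerivWithin_univ]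
    congr 1
    apply Filter.EventuallyEq.iteratedFDerivWithin_eq
    · rw [nhdsWithin_univ]
      exact qf_eventuallyEq ht0
    · exact (qf_eventuallyEq ht0).eq_of_nhds
  rw [hcong, iteratedDeriv_rpow _ i t ht0, Real.norm_eq_abs, abs_mul]
  have hrw : t ^ ((-(1/2) : ℝ) - i) = (Real.sqrt t)⁻¹ * (t⁻¹) ^ i := by
    rw [show ((-(1/2) : ℝ) - i) = (-(1/2) : ℝ) + (-(i:ℝ)) by ring]
    rw [Real.rpow_add ht0, Real.rpow_neg ht0.le, ← Real.sqrt_eq_rpow,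
      Real.rpow_neg ht0.le, Real.rpow_natCast, inv_pow]
  have habs : |t ^ ((-(1/2) : ℝ) - i)| = (Real.sqrt t)⁻¹ * (t⁻¹) ^ i := by
    rw [abs_of_nonneg (Real.rpow_nonneg ht0.le _), hrw]
  rw [habs]
  have hd : |∏ j ∈ Finset.range i, ((-(1/2) : ℝ) - j)| ≤ (n.factorial : ℝ) := by
    rw [Finset.abs_prod]
    calc ∏ j ∈ Finset.range i, |(-(1/2) : ℝ) - j|
        ≤ ∏ j ∈ Finset.range i, ((j : ℝ) + 1) := by
          apply Finset.prod_le_prod (fun j _ => abs_nonneg _)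
          intro j _
          have h0 : (0:ℝ) ≤ (j:ℝ) := Nat.cast_nonneg j
          rw [abs_of_nonpos (by linarith)]
          linarith
      _ = (i.factorial : ℝ) := prod_range_add_one_eq_factorial' i
      _ ≤ (n.factorial : ℝ) := by
          exact_mod_cast Nat.factorial_le (by omega)
  have hpow : ((t⁻¹) ^ i : ℝ) ≤ (t⁻¹) ^ n := by
    apply pow_le_pow_right₀ _ hi
    rw [one_le_inv_iff₀]
    exact ⟨ht0, ht1⟩
  have h1 : (0:ℝ) ≤ (Real.sqrt t)⁻¹ := by positivity
  exact mul_le_mul hd (mul_le_mul_of_nonneg_left hpow h1) (by positivity) (by positivity)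

/-! ### Bounds for iterated derivatives of linear and quadratic maps -/

section CLM
variable {E F : Type*} [NormedAddCommGroup E] [NormedSpace ℝ E]
  [NormedAddCommGroup F] [NormedSpace ℝ F]

lemma norm_iFD_clm_le (L : E →L[ℝ] F) {n : ℕ} (hn : 1 ≤ n) (x : E) :
    ‖iteratedFDeriv ℝ n (⇑L) x‖ ≤ ‖L‖ := by
  obtain ⟨k, rfl⟩ : ∃ k, n = k + 1 := ⟨n - 1, by omega⟩
  rw [← norm_iteratedFDeriv_fderiv]
  have hfd : (fderiv ℝ (⇑L)) = fun _ : E => L := funext fun y => L.fderiv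
  rw [hfd]
  cases k with
  | zero =>
    rw [norm_iteratedFDeriv_zero]
  | succ k =>
    rw [iteratedFDeriv_const_of_ne (by omega)]
    simp [norm_nonneg]

lemma norm_iFD_normsq_le {H : Type*} [NormedAddCommGroup H] [InnerProductSpace ℝ H]
    (L : E →L[ℝ] H) (n : ℕ) (hn : n ≤ 3) (x : E) (hx : ‖L x‖ ≤ 1) :
    ‖iteratedFDeriv ℝ n (fun v => ‖L v‖ ^ 2) x‖ ≤ 8 * (1 + ‖L‖) ^ 2 := by
  have heq : (fun v => ‖L v‖ ^ 2) = fun v => (innerSL ℝ (E := H)) (L v) (L v) := by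
    funext v
    rw [innerSL_apply_apply, real_inner_self_eq_norm_sq]
  rw [heq]
  have hB : ‖(innerSL ℝ (E := H))‖ ≤ 1 := norm_innerSL_le ℝ
  have hL1 : (1:ℝ) ≤ 1 + ‖L‖ := by linarith [norm_nonneg L]
  have key := (innerSL ℝ (E := H)).norm_iteratedFDeriv_le_of_bilinear_of_le_one
    (N := (⊤:ℕ∞)) (L.contDiff) (L.contDiff) x (n := n) (by exact_mod_cast le_top) hB
  have hfac : ∀ k : ℕ, ‖iteratedFDeriv ℝ k (⇑L) x‖ ≤ 1 + ‖L‖ := by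
    intro k
    cases k with
    | zero => rw [norm_iteratedFDeriv_zero]; linarith
    | succ k => exact (norm_iFD_clm_le L (by omega) x).trans (by linarith)
  refine key.trans ?_
  have hsum : ∑ i ∈ Finset.range (n + 1), (n.choose i : ℝ) * ‖iteratedFDeriv ℝ i (⇑L) x‖ *
      ‖iteratedFDeriv ℝ (n - i) (⇑L) x‖
      ≤ ∑ i ∈ Finset.range (n + 1), (n.choose i : ℝ) * ((1 + ‖L‖) * (1 + ‖L‖)) := by
    apply Finset.sum_le_sum
    intro i _
    rw [mul_assoc]
    apply mul_le_mul_of_nonneg_left _ (by positivity)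
    exact mul_le_mul (hfac i) (hfac (n - i)) (norm_nonneg _) (by linarith)
  refine hsum.trans ?_
  rw [← Finset.sum_mul]
  have h2 : (∑ i ∈ Finset.range (n + 1), (n.choose i : ℝ)) = 2 ^ n := by
    rw [← Nat.cast_sum, Nat.sum_range_choose]
    push_cast
    ring
  rw [h2]
  have h8 : (2:ℝ) ^ n ≤ 8 := by
    calc (2:ℝ) ^ n ≤ 2 ^ 3 := by
          apply pow_le_pow_right₀ (by norm_num) hn
      _ = 8 := by norm_num
  calc (2:ℝ) ^ n * ((1 + ‖L‖) * (1 + ‖L‖)) ≤ 8 * ((1 + ‖L‖) * (1 + ‖L‖)) := by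
        apply mul_le_mul_of_nonneg_right h8 (by positivity)
    _ = 8 * (1 + ‖L‖) ^ 2 := by ring

end CLM

lemma norm_iFD_gM_le (M : Matrix (Fin 3) (Fin 3) ℝ) {i : ℕ} (hi1 : 1 ≤ i) (hi3 : i ≤ 3)
    (v : E3) (hv : ‖LM M v‖ ≤ 1) :
    ‖iteratedFDeriv ℝ i (gM M) v‖ ≤ 8 * (1 + ‖LM M‖) ^ 2 := by
  have hrw : gM M = (fun _ : E3 => (1:ℝ)) + (- fun v => ‖LM M v‖ ^ 2) := by
    funext x
    simp [gM, sub_eq_add_neg]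
  rw [hrw]
  have hf : ContDiff ℝ i (fun _ : E3 => (1:ℝ)) := contDiff_const
  have hg : ContDiff ℝ i (- fun v : E3 => ‖LM M v‖ ^ 2) :=
    ((((LM M).contDiff (n := (⊤:ℕ∞))).norm_sq ℝ).neg).of_le (by exact_mod_cast le_top)
  rw [iteratedFDeriv_add_apply hf.contDiffAt hg.contDiffAt]
  rw [iteratedFDeriv_const_of_ne (by omega)]
  rw [iteratedFDeriv_neg_apply]
  simp only [Pi.zero_apply, zero_add, norm_neg]
  exact norm_iFD_normsq_le (LM M) i hi3 v hv

/-! ### Main theorem -/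
set_option maxHeartbeats 1000000 in

theorem stmt_2 (M : Matrix (Fin 3) (Fin 3) ℝ) (hM : IsUnit M) :
    ∃ N > (0 : ℝ), ∀ m : ℝ, 1 ≤ m →
      -- 𝔚 restricted to the ball {|w| < m} is a C^∞ diffeomorphism onto its image,
      -- with inverse (the restriction of) invW
      Set.InjOn (frakW M) (Metric.ball (0 : E3) m) ∧
      IsOpen (frakW M '' Metric.ball (0 : E3) m) ∧
      ContDiffOn ℝ (⊤ : ℕ∞) (frakW M) (Metric.ball (0 : E3) m) ∧
      ContDiffOn ℝ (⊤ : ℕ∞) (invW M) (frakW M '' Metric.ball (0 : E3) m) ∧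
      (∀ w ∈ Metric.ball (0 : E3) m, invW M (frakW M w) = w) ∧
      (∀ v ∈ frakW M '' Metric.ball (0 : E3) m, frakW M (invW M v) = v) ∧
      -- derivative bounds for the inverse map
      (∀ j ∈ ({1, 2, 3} : Set ℕ), ∀ v ∈ frakW M '' Metric.ball (0 : E3) m,
        ‖iteratedFDeriv ℝ j (invW M) v‖ ≤ N * m ^ (2 * j + 1)) := by
  set K : ℝ := 1 + ‖LM M‖ ^ 2 with hKdef
  have hK1 : (1:ℝ) ≤ K := by rw [hKdef]; nlinarith [norm_nonneg (LM M)]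
  have hK0 : (0:ℝ) < K := by linarith
  set Dg : ℝ := max 1 (8 * (1 + ‖LM M‖) ^ 2) with hDgdef
  have hDg1 : (1:ℝ) ≤ Dg := le_max_left _ _
  have hDg0 : (0:ℝ) < Dg := by linarith
  set cI : ℝ := max 1 ‖LM M⁻¹‖ with hcIdef
  have hcI1 : (1:ℝ) ≤ cI := le_max_left _ _
  set A0 : ℝ := 36 * Real.sqrt K * K ^ 3 * Dg ^ 3 with hA0def
  have hsqK0 : (0:ℝ) < Real.sqrt K := Real.sqrt_pos.2 hK0
  have hK3 : (1:ℝ) ≤ K ^ 3 := one_le_pow₀ hK1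
  have hDg3 : (1:ℝ) ≤ Dg ^ 3 := one_le_pow₀ hDg1
  have h36 : (1:ℝ) ≤ 36 * K ^ 3 * Dg ^ 3 := by nlinarith
  have hA0pos : (0:ℝ) < A0 := by
    rw [hA0def]
    have h1 : (0:ℝ) < 36 * Real.sqrt K := by linarith
    exact mul_pos (mul_pos h1 (by linarith)) (by linarith)
  have hsqKA : Real.sqrt K ≤ A0 := by
    calc Real.sqrt K = Real.sqrt K * 1 := (mul_one _).symm
      _ ≤ Real.sqrt K * (36 * K ^ 3 * Dg ^ 3) :=
          mul_le_mul_of_nonneg_left h36 (Real.sqrt_nonneg K)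
      _ = A0 := by rw [hA0def]; ring
  refine ⟨8 * A0 * cI, by nlinarith, ?_⟩
  intro m hm
  have hm0 : (0:ℝ) < m := by linarith
  have himg_sub : frakW M '' Metric.ball (0:E3) m ⊆ UM M := by
    rw [image_eq]
    exact Set.inter_subset_left
  refine ⟨?_, isOpen_image M m, (contDiff_frakW M).contDiffOn,
      (contDiffOn_invW M).mono himg_sub,
      fun w _ => invW_frakW M w,
      fun v hv => frakW_invW M v (himg_sub hv), ?_⟩
  · intro a _ b _ hab
    have h := congrArg (invW M) hab
    rwa [invW_frakW, invW_frakW] at h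
  -- the derivative bounds
  intro j hj v hv
  have hj13 : 1 ≤ j ∧ j ≤ 3 := by
    simp only [Set.mem_insert_iff, Set.mem_singleton_iff] at hj
    rcases hj with rfl | rfl | rfl <;> omega
  obtain ⟨hj1, hj3⟩ := hj13
  obtain ⟨w, hw, rfl⟩ := hv
  have hvU : frakW M w ∈ UM M := himg_sub ⟨w, hw, rfl⟩
  have hgw : gM M (frakW M w) = (1 + ‖LM M w‖ ^ 2)⁻¹ := gM_frakW M w
  have h1w : (0:ℝ) < 1 + ‖LM M w‖ ^ 2 := one_add_pos M w
  have ht0 : 0 < gM M (frakW M w) := by rw [hgw]; exact inv_pos.2 h1w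
  have ht1 : gM M (frakW M w) ≤ 1 := by
    rw [hgw]
    apply inv_le_one_of_one_le₀
    nlinarith [sq_nonneg ‖LM M w‖]
  have hwm : ‖w‖ < m := by rwa [← mem_ball_zero_iff]
  have hLw : ‖LM M w‖ ≤ ‖LM M‖ * m :=
    ((LM M).le_opNorm w).trans (mul_le_mul_of_nonneg_left hwm.le (norm_nonneg _))
  have hKm : 1 + ‖LM M w‖ ^ 2 ≤ K * m ^ 2 := by
    have h2 : ‖LM M w‖ ^ 2 ≤ (‖LM M‖ * m) ^ 2 := by
      apply pow_le_pow_left₀ (norm_nonneg _) hLw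
    rw [hKdef]
    nlinarith
  have hKm2 : (1:ℝ) ≤ K * m ^ 2 := by nlinarith
  have hKm2' : (0:ℝ) < K * m ^ 2 := by linarith
  have hδ : (K * m ^ 2)⁻¹ ≤ gM M (frakW M w) := by
    rw [hgw]
    exact inv_anti₀ h1w hKm
  have hsqrt_t : (Real.sqrt (gM M (frakW M w)))⁻¹ ≤ Real.sqrt K * m := by
    have h1 : Real.sqrt ((K * m ^ 2)⁻¹) ≤ Real.sqrt (gM M (frakW M w)) :=
      Real.sqrt_le_sqrt hδ
    have h2 : (0:ℝ) < Real.sqrt ((K * m ^ 2)⁻¹) := Real.sqrt_pos.2 (inv_pos.2 hKm2')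
    have h3 : (Real.sqrt (gM M (frakW M w)))⁻¹ ≤ (Real.sqrt ((K * m ^ 2)⁻¹))⁻¹ :=
      inv_anti₀ h2 h1
    rw [Real.sqrt_inv, inv_inv] at h3
    rwa [Real.sqrt_mul hK0.le, Real.sqrt_sq hm0.le] at h3
  have hti : (gM M (frakW M w))⁻¹ ≤ K * m ^ 2 := by
    have h := inv_anti₀ (inv_pos.2 hKm2') hδ
    rwa [inv_inv] at h
  have hLv : ‖LM M (frakW M w)‖ ≤ 1 := by
    have ht : gM M (frakW M w) = 1 - ‖LM M (frakW M w)‖ ^ 2 := rfl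
    have h2 : ‖LM M (frakW M w)‖ ^ 2 ≤ 1 := by rw [ht] at ht0; linarith
    calc ‖LM M (frakW M w)‖ = Real.sqrt (‖LM M (frakW M w)‖ ^ 2) :=
          (Real.sqrt_sq (norm_nonneg _)).symm
      _ ≤ Real.sqrt 1 := Real.sqrt_le_sqrt h2
      _ = 1 := Real.sqrt_one
  have hvI : ‖frakW M w‖ ≤ cI := by
    have h := LM_inv M hM (frakW M w)
    calc ‖frakW M w‖ = ‖LM M⁻¹ (LM M (frakW M w))‖ := by rw [h]
      _ ≤ ‖LM M⁻¹‖ * ‖LM M (frakW M w)‖ := (LM M⁻¹).le_opNorm _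
      _ ≤ ‖LM M⁻¹‖ * 1 := mul_le_mul_of_nonneg_left hLv (norm_nonneg _)
      _ ≤ cI := by rw [mul_one, hcIdef]; exact le_max_right _ _
  have hmaps : Set.MapsTo (gM M) (UM M) (Set.Ioi 0) := fun x hx => hx
  have hmle : m ≤ m ^ (2 * j + 1) := le_self_pow₀ hm (by omega)
  -- bound on the derivatives of φ = qf ∘ gM M
  have hφ : ∀ i, i ≤ j → ‖iteratedFDerivWithin ℝ i (qf ∘ gM M) (UM M) (frakW M w)‖
      ≤ A0 * m ^ (2 * j + 1) := by
    intro i hij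
    rcases Nat.eq_zero_or_pos i with rfl | hi1
    · rw [norm_iteratedFDerivWithin_zero]
      have heq : ‖(qf ∘ gM M) (frakW M w)‖ = (Real.sqrt (gM M (frakW M w)))⁻¹ := by
        rw [Function.comp_apply, qf, Real.norm_eq_abs,
          abs_of_nonneg (by positivity)]
      rw [heq]
      calc (Real.sqrt (gM M (frakW M w)))⁻¹ ≤ Real.sqrt K * m := hsqrt_t
        _ ≤ A0 * m ^ (2 * j + 1) :=
            mul_le_mul hsqKA hmle hm0.le hA0pos.le
    · have key := norm_iteratedFDerivWithin_comp_le (𝕜 := ℝ) (g := qf) (f := gM M) (n := i)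
        (s := UM M) (t := Set.Ioi 0) (N := ((⊤:ℕ∞) : WithTop ℕ∞)) contDiffOn_qf
        ((contDiff_gM M).contDiffOn)
        (by exact_mod_cast le_top) isOpen_Ioi.uniqueDiffOn (isOpen_UM M).uniqueDiffOn
        hmaps hvU
        (C := (i.factorial : ℝ) * ((Real.sqrt (gM M (frakW M w)))⁻¹
          * ((gM M (frakW M w))⁻¹) ^ i)) (D := Dg)
        (fun k hk => norm_iFDW_qf hk ht0 ht1)
        (fun k hk1 hki => by
          rw [iteratedFDerivWithin_of_isOpen k (isOpen_UM M) hvU]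
          refine (norm_iFD_gM_le M hk1 (by omega) _ hLv).trans ?_
          calc 8 * (1 + ‖LM M‖) ^ 2 ≤ Dg := by rw [hDgdef]; exact le_max_right _ _
            _ ≤ Dg ^ k := le_self_pow₀ hDg1 (by omega))
      refine key.trans ?_
      have hfi : (i.factorial : ℝ) ≤ 6 := by
        have h := Nat.factorial_le (show i ≤ 3 by omega)
        calc (i.factorial : ℝ) ≤ (Nat.factorial 3 : ℝ) := by exact_mod_cast h
          _ = 6 := by norm_num [Nat.factorial]
      have hS0 : (0:ℝ) ≤ (Real.sqrt (gM M (frakW M w)))⁻¹ := by positivity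
      have hT0 : (0:ℝ) ≤ ((gM M (frakW M w))⁻¹) ^ i := by positivity
      have hTb : ((gM M (frakW M w))⁻¹) ^ i ≤ (K * m ^ 2) ^ j := by
        calc ((gM M (frakW M w))⁻¹) ^ i ≤ (K * m ^ 2) ^ i :=
              pow_le_pow_left₀ (inv_nonneg.2 ht0.le) hti i
          _ ≤ (K * m ^ 2) ^ j := pow_le_pow_right₀ hKm2 hij
      have hsKm0 : (0:ℝ) ≤ Real.sqrt K * m := by positivity
      have step1 : (Real.sqrt (gM M (frakW M w)))⁻¹ * ((gM M (frakW M w))⁻¹) ^ i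
          ≤ (Real.sqrt K * m) * (K * m ^ 2) ^ j :=
        mul_le_mul hsqrt_t hTb hT0 hsKm0
      have hKmj0 : (0:ℝ) ≤ (K * m ^ 2) ^ j := by positivity
      have step2 : (i.factorial : ℝ) * ((Real.sqrt (gM M (frakW M w)))⁻¹
          * ((gM M (frakW M w))⁻¹) ^ i)
          ≤ 6 * ((Real.sqrt K * m) * (K * m ^ 2) ^ j) :=
        mul_le_mul hfi step1 (mul_nonneg hS0 hT0) (by norm_num)
      have hfip : (0:ℝ) ≤ (i.factorial : ℝ) := by positivity
      have step3 : (i.factorial : ℝ) * ((i.factorial : ℝ)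
            * ((Real.sqrt (gM M (frakW M w)))⁻¹ * ((gM M (frakW M w))⁻¹) ^ i)) * Dg ^ i
          ≤ 6 * (6 * ((Real.sqrt K * m) * (K * m ^ 2) ^ j)) * Dg ^ 3 := by
        have hA : (i.factorial : ℝ) * ((i.factorial : ℝ)
              * ((Real.sqrt (gM M (frakW M w)))⁻¹ * ((gM M (frakW M w))⁻¹) ^ i))
            ≤ 6 * (6 * ((Real.sqrt K * m) * (K * m ^ 2) ^ j)) :=
          mul_le_mul hfi step2 (mul_nonneg hfip (mul_nonneg hS0 hT0)) (by norm_num)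
        have hB : Dg ^ i ≤ Dg ^ 3 := pow_le_pow_right₀ hDg1 (by omega)
        exact mul_le_mul hA hB (pow_nonneg hDg0.le i)
          (by positivity)
      refine step3.trans ?_
      have hKmj : (K * m ^ 2) ^ j = K ^ j * m ^ (2 * j) := by
        rw [mul_pow, ← pow_mul]
      have hKj : K ^ j ≤ K ^ 3 := pow_le_pow_right₀ hK1 hj3
      calc 6 * (6 * ((Real.sqrt K * m) * (K * m ^ 2) ^ j)) * Dg ^ 3
          = (36 * Real.sqrt K * Dg ^ 3 * m ^ (2 * j) * m) * K ^ j := by rw [hKmj]; ring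
        _ ≤ (36 * Real.sqrt K * Dg ^ 3 * m ^ (2 * j) * m) * K ^ 3 := by
            apply mul_le_mul_of_nonneg_left hKj
            positivity
        _ = A0 * (m ^ (2 * j) * m) := by rw [hA0def]; ring
        _ = A0 * m ^ (2 * j + 1) := by rw [← pow_succ]
  -- bound on the derivatives of the identity
  have hid : ∀ k : ℕ, ‖iteratedFDerivWithin ℝ k (fun x : E3 => x) (UM M) (frakW M w)‖
      ≤ cI := by
    intro k
    rw [iteratedFDerivWithin_of_isOpen k (isOpen_UM M) hvU]
    cases k with
    | zero => rw [norm_iteratedFDeriv_zero]; exact hvI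
    | succ k =>
      have hidc : (fun x : E3 => x) = ⇑(ContinuousLinearMap.id ℝ E3) := rfl
      rw [hidc]
      refine (norm_iFD_clm_le _ (by omega) _).trans ?_
      exact le_trans (ContinuousLinearMap.norm_id_le) hcI1
  -- combine via the product rule
  rw [← iteratedFDerivWithin_of_isOpen j (isOpen_UM M) hvU]
  have hinv_eq : invW M = fun y => (qf ∘ gM M) y • (fun x : E3 => x) y := rfl
  rw [hinv_eq]
  have hφcd : ContDiffOn ℝ ((⊤:ℕ∞) : WithTop ℕ∞) (qf ∘ gM M) (UM M) :=
    contDiffOn_qf.comp (contDiff_gM M).contDiffOn hmaps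
  have key2 := norm_iteratedFDerivWithin_smul_le (𝕜 := ℝ) (f := qf ∘ gM M)
    (g := fun x : E3 => x) (N := ((⊤:ℕ∞) : WithTop ℕ∞)) hφcd contDiff_id.contDiffOn
    (isOpen_UM M).uniqueDiffOn hvU (n := j) (by exact_mod_cast le_top)
  refine key2.trans ?_
  have hA0m : (0:ℝ) ≤ A0 * m ^ (2 * j + 1) := by positivity
  calc ∑ i ∈ Finset.range (j + 1), (j.choose i : ℝ)
        * ‖iteratedFDerivWithin ℝ i (qf ∘ gM M) (UM M) (frakW M w)‖
        * ‖iteratedFDerivWithin ℝ (j - i) (fun x : E3 => x) (UM M) (frakW M w)‖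
      ≤ ∑ i ∈ Finset.range (j + 1), (j.choose i : ℝ) * ((A0 * m ^ (2 * j + 1)) * cI) := by
        apply Finset.sum_le_sum
        intro i hi
        have hij : i ≤ j := Nat.lt_succ_iff.1 (Finset.mem_range.1 hi)
        rw [mul_assoc]
        apply mul_le_mul_of_nonneg_left _ (by positivity)
        exact mul_le_mul (hφ i hij) (hid (j - i)) (norm_nonneg _) hA0m
    _ = (∑ i ∈ Finset.range (j + 1), (j.choose i : ℝ)) * ((A0 * m ^ (2 * j + 1)) * cI) := by
        rw [← Finset.sum_mul]
    _ = 2 ^ j * ((A0 * m ^ (2 * j + 1)) * cI) := by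
        congr 1
        rw [← Nat.cast_sum, Nat.sum_range_choose]
        push_cast
        ring
    _ ≤ 8 * ((A0 * m ^ (2 * j + 1)) * cI) := by
        apply mul_le_mul_of_nonneg_right _ (by positivity)
        calc (2:ℝ) ^ j ≤ 2 ^ 3 := pow_le_pow_right₀ (by norm_num) hj3
          _ = 8 := by norm_num
    _ = (8 * A0 * cI) * m ^ (2 * j + 1) := by ring
end
end

section
/- Given ρ₁, ρ₂ ∈ ℝ, let M = M(ρ₁,ρ₂) be the 3×3 real matrix with rows (1, 0, −ρ₁), (0, 1, −ρ₂), (ρ₁, ρ₂, 1) (note det M = 1 + ρ₁² + ρ₂² > 0), and let 𝐑 = diag(1, 1, −1). For w ∈ ℝ³ set p(w) = Mw and p̂₀(w) = (1+|Mw|²)^{1/2}. For w ≠ w′, define the 3×3 matrix Ξ(w, w′) = M⁻¹ Φ(P̂(w), P̂(w′)) M⁻ᵀ, where Φ is the Belyaev–Budker kernel evaluated at momenta p = p(w), q = p(w′) (so p₀ = p̂₀(w), q₀ = p̂₀(w′)). Then for i ∈ {1, 2} and all w ≠ w′: Ξ^{i3}(w, w′) = − Ξ^{i3}(𝐑w,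 𝐑w′). -/
noncomputable section
open Real Matrix MeasureTheory
open scoped ENNReal NNReal

/-- `p₀ = (1 + |p|²)^{1/2}`. -/
def pzero (p : Fin 3 → ℝ) : ℝ := Real.sqrt (1 + ‖toE3 p‖ ^ 2)

/-- The Lorentzian product `P·Q = p₀ q₀ − p·q`. -/
def lorPQ (p q : Fin 3 → ℝ) : ℝ := pzero p * pzero q - p ⬝ᵥ q

/-- `Λ(P,Q) = (P·Q)² ((P·Q)² − 1)^{−3/2}`. -/
def Lambda (p q : Fin 3 → ℝ) : ℝ :=
  (lorPQ p q) ^ 2 * ((lorPQ p q) ^ 2 - 1) ^ (-(3 : ℝ) / 2)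

/-- `S(P,Q) = ((P·Q)² − 1) I₃ − (p−q)⊗(p−q) + (P·Q − 1)(p⊗q + q⊗p)`. -/
def SPQ (p q : Fin 3 → ℝ) : Matrix (Fin 3) (Fin 3) ℝ :=
  ((lorPQ p q) ^ 2 - 1) • (1 : Matrix (Fin 3) (Fin 3) ℝ)
    - vecMulVec (p - q) (p - q)
    + (lorPQ p q - 1) • (vecMulVec p q + vecMulVec q p)

/-- The Belyaev–Budker kernel `Φ(P,Q) = (Λ(P,Q)/(p₀ q₀)) S(P,Q)`. -/
def Phi (p q : Fin 3 → ℝ) : Matrix (Fin 3) (Fin 3) ℝ :=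
  (Lambda p q / (pzero p * pzero q)) • SPQ p q

/-- The partial derivative `∂_{x_i} f (x)`. -/
def pd (i : Fin 3) (f : (Fin 3 → ℝ) → ℝ) (x : Fin 3 → ℝ) : ℝ :=
  fderiv ℝ f x (Pi.single i 1)

/-!
STATEMENT 6: Given ρ₁, ρ₂ ∈ ℝ, let M = M(ρ₁,ρ₂) be the 3×3 real matrix with rows
(1, 0, −ρ₁), (0, 1, −ρ₂), (ρ₁, ρ₂, 1) and let 𝐑 = diag(1, 1, −1). For w ∈ ℝ³ set
p(w) = Mw. For w ≠ w′, define Ξ(w, w′) = M⁻¹ Φ(P̂(w), P̂(w′)) M⁻ᵀ, where Φ is the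
Belyaev–Budker kernel at momenta p = Mw, q = Mw′. Then for i ∈ {1, 2} and all
w ≠ w′: Ξ^{i3}(w, w′) = − Ξ^{i3}(𝐑w, 𝐑w′).
-/

/-- The matrix with rows (1, 0, −ρ₁), (0, 1, −ρ₂), (ρ₁, ρ₂, 1). -/
def Mmat (ρ₁ ρ₂ : ℝ) : Matrix (Fin 3) (Fin 3) ℝ :=
  !![1, 0, -ρ₁; 0, 1, -ρ₂; ρ₁, ρ₂, 1]

/-- The reflection matrix 𝐑 = diag(1, 1, −1). -/
def Rmat : Matrix (Fin 3) (Fin 3) ℝ := !![1, 0, 0; 0, 1, 0; 0, 0, -1]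

/-- `Ξ(w, w′) = M⁻¹ Φ(P̂(w), P̂(w′)) M⁻ᵀ`. -/
def Xi (ρ₁ ρ₂ : ℝ) (w w' : Fin 3 → ℝ) : Matrix (Fin 3) (Fin 3) ℝ :=
  (Mmat ρ₁ ρ₂)⁻¹ * Phi ((Mmat ρ₁ ρ₂).mulVec w) ((Mmat ρ₁ ρ₂).mulVec w') * ((Mmat ρ₁ ρ₂)⁻¹)ᵀ

namespace Stmt6Aux

lemma norm_sq_eq (v : Fin 3 → ℝ) : ‖toE3 v‖ ^ 2 = v 0 ^ 2 + v 1 ^ 2 + v 2 ^ 2 := by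
  rw [toE3, EuclideanSpace.norm_eq, Real.sq_sqrt (by positivity)]
  simp [Fin.sum_univ_three, sq_abs]

lemma Minv (ρ₁ ρ₂ : ℝ) : (Mmat ρ₁ ρ₂)⁻¹ =
    (1 / (1 + ρ₁ ^ 2 + ρ₂ ^ 2)) •
      !![1 + ρ₂ ^ 2, -(ρ₁ * ρ₂), ρ₁; -(ρ₁ * ρ₂), 1 + ρ₁ ^ 2, ρ₂; -ρ₁, -ρ₂, 1] := by
  have hd : (1 + ρ₁ ^ 2 + ρ₂ ^ 2) ≠ 0 := by positivity
  apply inv_eq_right_inv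
  ext i j
  fin_cases i <;> fin_cases j <;>
    simp [Mmat, Matrix.mul_apply, Fin.sum_univ_three, Matrix.one_apply] <;>
    field_simp <;> ring

lemma Minv_mul (ρ₁ ρ₂ : ℝ) : (Mmat ρ₁ ρ₂)⁻¹ * Mmat ρ₁ ρ₂ = 1 := by
  apply Matrix.nonsing_inv_mul
  have : (Mmat ρ₁ ρ₂).det = 1 + ρ₁ ^ 2 + ρ₂ ^ 2 := by
    simp [Mmat, Matrix.det_fin_three]; ring
  rw [this]; exact isUnit_iff_ne_zero.mpr (by positivity)

lemma pzero_R (ρ₁ ρ₂ : ℝ) (w : Fin 3 → ℝ) :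
    pzero ((Mmat ρ₁ ρ₂).mulVec (Rmat.mulVec w)) = pzero ((Mmat ρ₁ ρ₂).mulVec w) := by
  unfold pzero
  congr 2
  rw [norm_sq_eq, norm_sq_eq]
  simp [Mmat, Rmat, Matrix.mulVec, dotProduct, Fin.sum_univ_three,
    Matrix.vecHead, Matrix.vecTail]
  ring

lemma dot_R (ρ₁ ρ₂ : ℝ) (w w' : Fin 3 → ℝ) :
    (Mmat ρ₁ ρ₂).mulVec (Rmat.mulVec w) ⬝ᵥ (Mmat ρ₁ ρ₂).mulVec (Rmat.mulVec w')
      = (Mmat ρ₁ ρ₂).mulVec w ⬝ᵥ (Mmat ρ₁ ρ₂).mulVec w' := by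
  simp [Mmat, Rmat, Matrix.mulVec, dotProduct, Fin.sum_univ_three,
    Matrix.vecHead, Matrix.vecTail]
  ring

lemma lor_R (ρ₁ ρ₂ : ℝ) (w w' : Fin 3 → ℝ) :
    lorPQ ((Mmat ρ₁ ρ₂).mulVec (Rmat.mulVec w)) ((Mmat ρ₁ ρ₂).mulVec (Rmat.mulVec w'))
      = lorPQ ((Mmat ρ₁ ρ₂).mulVec w) ((Mmat ρ₁ ρ₂).mulVec w') := by
  rw [lorPQ, lorPQ, pzero_R, pzero_R, dot_R]

lemma Lambda_R (ρ₁ ρ₂ : ℝ) (w w' : Fin 3 → ℝ) :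
    Lambda ((Mmat ρ₁ ρ₂).mulVec (Rmat.mulVec w)) ((Mmat ρ₁ ρ₂).mulVec (Rmat.mulVec w'))
      = Lambda ((Mmat ρ₁ ρ₂).mulVec w) ((Mmat ρ₁ ρ₂).mulVec w') := by
  rw [Lambda, Lambda, lor_R]

/-- `vecMulVec (A *ᵥ u) (A *ᵥ v) = A * vecMulVec u v * Aᵀ`. -/
lemma vecMulVec_mulVec (A : Matrix (Fin 3) (Fin 3) ℝ) (u v : Fin 3 → ℝ) :
    vecMulVec (A.mulVec u) (A.mulVec v) = A * vecMulVec u v * Aᵀ := by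
  ext i j
  simp [Matrix.vecMulVec_apply, Matrix.mul_apply, Matrix.mulVec, dotProduct,
    Fin.sum_univ_three, Matrix.transpose_apply]
  ring

/-- Conjugation kills the `M`'s in the rank-one pieces. -/
lemma conj (ρ₁ ρ₂ : ℝ) (u v : Fin 3 → ℝ) :
    (Mmat ρ₁ ρ₂)⁻¹ * vecMulVec ((Mmat ρ₁ ρ₂).mulVec u) ((Mmat ρ₁ ρ₂).mulVec v)
        * ((Mmat ρ₁ ρ₂)⁻¹)ᵀ = vecMulVec u v := by
  rw [vecMulVec_mulVec]
  have h1 := Minv_mul ρ₁ ρ₂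
  have h2 : (Mmat ρ₁ ρ₂)ᵀ * ((Mmat ρ₁ ρ₂)⁻¹)ᵀ = 1 := by
    rw [← Matrix.transpose_mul, h1, Matrix.transpose_one]
  calc (Mmat ρ₁ ρ₂)⁻¹ * (Mmat ρ₁ ρ₂ * vecMulVec u v * (Mmat ρ₁ ρ₂)ᵀ) * ((Mmat ρ₁ ρ₂)⁻¹)ᵀ
      = ((Mmat ρ₁ ρ₂)⁻¹ * Mmat ρ₁ ρ₂) * vecMulVec u v
          * ((Mmat ρ₁ ρ₂)ᵀ * ((Mmat ρ₁ ρ₂)⁻¹)ᵀ) := by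
        simp only [Matrix.mul_assoc]
    _ = vecMulVec u v := by rw [h1, h2, Matrix.one_mul, Matrix.mul_one]

/-- Structural form of `Xi`. -/
lemma Xi_eq (ρ₁ ρ₂ : ℝ) (w w' : Fin 3 → ℝ) :
    Xi ρ₁ ρ₂ w w' =
      (Lambda ((Mmat ρ₁ ρ₂).mulVec w) ((Mmat ρ₁ ρ₂).mulVec w') /
          (pzero ((Mmat ρ₁ ρ₂).mulVec w) * pzero ((Mmat ρ₁ ρ₂).mulVec w'))) •
        (((lorPQ ((Mmat ρ₁ ρ₂).mulVec w) ((Mmat ρ₁ ρ₂).mulVec w')) ^ 2 - 1) •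
            ((Mmat ρ₁ ρ₂)⁻¹ * ((Mmat ρ₁ ρ₂)⁻¹)ᵀ)
          - vecMulVec (w - w') (w - w')
          + (lorPQ ((Mmat ρ₁ ρ₂).mulVec w) ((Mmat ρ₁ ρ₂).mulVec w') - 1) •
              (vecMulVec w w' + vecMulVec w' w)) := by
  rw [Xi, Phi, SPQ, ← Matrix.mulVec_sub]
  rw [Matrix.mul_smul, Matrix.smul_mul]
  congr 1
  rw [Matrix.mul_add, Matrix.add_mul, Matrix.mul_sub, Matrix.sub_mul,
    Matrix.mul_smul, Matrix.smul_mul, Matrix.mul_one,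
    Matrix.mul_smul, Matrix.smul_mul, Matrix.mul_add, Matrix.add_mul,
    conj, conj, conj]

lemma Rvec_01 (w : Fin 3 → ℝ) (j : Fin 3) (hj : j = 0 ∨ j = 1) :
    Rmat.mulVec w j = w j := by
  rcases hj with rfl | rfl <;>
    simp [Rmat, Matrix.mulVec, dotProduct, Fin.sum_univ_three,
      Matrix.vecHead, Matrix.vecTail]

lemma Rvec_2 (w : Fin 3 → ℝ) : Rmat.mulVec w 2 = -(w 2) := by
  simp [Rmat, Matrix.mulVec, dotProduct, Fin.sum_univ_three,
    Matrix.vecHead, Matrix.vecTail]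

lemma B_02 (ρ₁ ρ₂ : ℝ) (j : Fin 3) (hj : j = 0 ∨ j = 1) :
    ((Mmat ρ₁ ρ₂)⁻¹ * ((Mmat ρ₁ ρ₂)⁻¹)ᵀ) j 2 = 0 := by
  rw [Minv]
  rcases hj with rfl | rfl <;>
    simp [Matrix.mul_apply, Fin.sum_univ_three, Matrix.transpose_apply,
      Matrix.smul_apply, Matrix.vecHead, Matrix.vecTail, Matrix.cons_val_zero,
      Matrix.cons_val_one, Matrix.head_cons, Matrix.cons_val_two, Matrix.tail_cons,
      smul_eq_mul] <;> ring

end Stmt6Aux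

open Stmt6Aux in
theorem stmt_6 (ρ₁ ρ₂ : ℝ) (w w' : Fin 3 → ℝ) (hww' : w ≠ w')
    (i : Fin 3) (hi : i = 0 ∨ i = 1) :
    Xi ρ₁ ρ₂ w w' i 2 = - Xi ρ₁ ρ₂ (Rmat.mulVec w) (Rmat.mulVec w') i 2 := by
  rw [Xi_eq, Xi_eq, lor_R, pzero_R, pzero_R, Lambda_R, ← Matrix.mulVec_sub]
  simp only [Matrix.smul_apply, Matrix.sub_apply, Matrix.add_apply,
    Matrix.vecMulVec_apply, smul_eq_mul, B_02 ρ₁ ρ₂ i hi,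
    Rvec_01 _ i hi, Rvec_2]
  ring
end
end
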